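/- Define θ⁻(t) = arcsin(e^t) for t < 0. The family of circular arcs C_{θ⁻(t)} = {(x,y) : x² + (csc θ⁻(t) − y)² = cot² θ⁻(t)} ∩ B² is a subsolution barrier for curve shortening flow: the inward normal speed of C_{θ⁻(t)} is no greater than its curvature. Concretely, writing the normal speed at a point with height y as y·θ'(t)/sin θ and the curvature as tan θ, one has y·(θ⁻)'(t)/sin θ⁻(t) − tan θ⁻(t) ≤ 0 for all points of the arc with (1−cos θ⁻)/sin θ⁻ ≤ y ≤ sin θ⁻. -/

import Mathlib

/-- The circles `C_{θ⁻(t)}` with `θ⁻(t) = arcsin(e^t)` form a subsolution barrier: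
at any point of height `y` on the arc, the inward normal speed `y·(θ⁻)'(t)/sin θ⁻`
is at most the curvature `tan θ⁻`. -/
theorem lower_circle_barrier {t y : ℝ} (ht : t < 0)
    (hy1 : (1 - Real.cos (Real.arcsin (Real.exp t))) / Real.sin (Real.arcsin (Real.exp t)) ≤ y)
    (hy2 : y ≤ Real.sin (Real.arcsin (Real.exp t))) :
    y * deriv (fun s : ℝ => Real.arcsin (Real.exp s)) t / Real.sin (Real.arcsin (Real.exp t))
      - Real.tan (Real.arcsin (Real.exp t)) ≤ 0 := by
  have he0 : (0:ℝ) < Real.exp t := Real.exp_pos t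
  have he1 : Real.exp t < 1 := Real.exp_lt_one_iff.mpr ht
  have hne1 : Real.exp t ≠ 1 := ne_of_lt he1
  have hnem1 : Real.exp t ≠ -1 := by linarith
  have hd : HasDerivAt (fun s : ℝ => Real.arcsin (Real.exp s))
      (1 / Real.sqrt (1 - Real.exp t ^ 2) * Real.exp t) t :=
    (Real.hasDerivAt_arcsin hnem1 hne1).comp t (Real.hasDerivAt_exp t)
  rw [hd.deriv, Real.sin_arcsin (by linarith) he1.le, Real.tan_arcsin]
  have hsq : (0:ℝ) < 1 - Real.exp t ^ 2 := by nlinarith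
  have hs : (0:ℝ) < Real.sqrt (1 - Real.exp t ^ 2) := Real.sqrt_pos.mpr hsq
  rw [Real.sin_arcsin (by linarith) he1.le] at hy2
  have key : y * (1 / Real.sqrt (1 - Real.exp t ^ 2) * Real.exp t) / Real.exp t
      - Real.exp t / Real.sqrt (1 - Real.exp t ^ 2)
      = (y - Real.exp t) / Real.sqrt (1 - Real.exp t ^ 2) := by
    field_simp
  rw [key]
  exact div_nonpos_of_nonpos_of_nonneg (by linarith) hs.le
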